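/- Let Ω be a finite connected subset of a weighted graph and p > 1. Then the first eigenfunction of the Dirichlet p-Laplacian on Ω is unique up to scalar multiplication: if u₁ and u₂ are both first eigenfunctions, there exists a nonzero constant c with u₁ = c·u₂. -/

import Mathlib

open scoped BigOperators

namespace PGraph

variable {V : Type*}

/-- The `p`-Dirichlet energy `E_p(u) = (1/2) ∑_{x,y} μ_{xy} |u(y)-u(x)|^p`. -/
noncomputable def energy (μ : V → V → ℝ) (p : ℝ) (u : V → ℝ) : ℝ :=
  (1 / 2) * ∑ᶠ x : V, ∑ᶠ y : V, μ x y * |u y - u x| ^ p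

/-- `‖u‖_{p,Ω}^p = ∑_{x∈Ω} |u(x)|^p ν_x`. -/
noncomputable def pnormP (ν : V → ℝ) (Ω : Finset V) (p : ℝ) (u : V → ℝ) : ℝ :=
  ∑ x ∈ Ω, |u x| ^ p * ν x

/-- The `p`-Laplacian `Δ_p u(x) = (1/ν_x) ∑_y μ_{xy} |u(y)-u(x)|^{p-2}(u(y)-u(x))`. -/
noncomputable def plap (μ : V → V → ℝ) (ν : V → ℝ) (p : ℝ) (u : V → ℝ) (x : V) : ℝ :=
  (1 / ν x) * ∑ᶠ y : V, μ x y * (|u y - u x| ^ (p - 2) * (u y - u x))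

/-- `u` is an eigenfunction of the Dirichlet `p`-Laplacian on `Ω` with eigenvalue `lam`:
`u` vanishes outside `Ω` (zero extension), `u ≢ 0` on `Ω`, and
`Δ_p u = -lam |u|^{p-2} u` on `Ω`. -/
def IsDirEigenfun (μ : V → V → ℝ) (ν : V → ℝ) (Ω : Finset V) (p : ℝ)
    (u : V → ℝ) (lam : ℝ) : Prop :=
  (∀ x, x ∉ Ω → u x = 0) ∧ (∃ x ∈ Ω, u x ≠ 0) ∧
    ∀ x ∈ Ω, plap μ ν p u x = -lam * (|u x| ^ (p - 2) * u x)

/-- The first Dirichlet eigenvalue, via the Rayleigh quotient characterization. -/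
noncomputable def lam1 (μ : V → V → ℝ) (ν : V → ℝ) (Ω : Finset V) (p : ℝ) : ℝ :=
  sInf {t : ℝ | ∃ u : V → ℝ, (∀ x, x ∉ Ω → u x = 0) ∧ (∃ x ∈ Ω, u x ≠ 0) ∧
    t = energy μ p u / pnormP ν Ω p u}

/-- The maximum Dirichlet eigenvalue, via the Rayleigh quotient characterization. -/
noncomputable def lamMax (μ : V → V → ℝ) (ν : V → ℝ) (Ω : Finset V) (p : ℝ) : ℝ :=
  sSup {t : ℝ | ∃ u : V → ℝ, (∀ x, x ∉ Ω → u x = 0) ∧ (∃ x ∈ Ω, u x ≠ 0) ∧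
    t = energy μ p u / pnormP ν Ω p u}

/-- The induced subgraph on `Ω` is connected. -/
def ConnOn (μ : V → V → ℝ) (Ω : Finset V) : Prop :=
  ∀ x ∈ Ω, ∀ y ∈ Ω,
    Relation.ReflTransGen (fun a b => a ∈ Ω ∧ b ∈ Ω ∧ 0 < μ a b) x y

/-- The induced subgraph on `Ω` is bipartite with parts `V₁, V₂`. -/
def BipartiteOn (μ : V → V → ℝ) (Ω : Finset V) : Prop :=
  ∃ V₁ V₂ : Set V, (Ω : Set V) = V₁ ∪ V₂ ∧ Disjoint V₁ V₂ ∧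
    ∀ x ∈ Ω, ∀ y ∈ Ω, 0 < μ x y → ((x ∈ V₁ ∧ y ∈ V₂) ∨ (x ∈ V₂ ∧ y ∈ V₁))

/-- A locally finite weighted graph: symmetric nonnegative edge weights without
self-loops, finitely many neighbours at each vertex, positive vertex weights. -/
structure IsWeightedGraph (μ : V → V → ℝ) (ν : V → ℝ) : Prop where
  symm : ∀ x y, μ x y = μ y x
  nonneg : ∀ x y, 0 ≤ μ x y
  loopless : ∀ x, μ x x = 0
  locFin : ∀ x, (Function.support (μ x)).Finite
  nuPos : ∀ x, 0 < ν x

/-- The edge boundary measure `|∂U|_μ` of a finite vertex set `U`. -/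
noncomputable def bdryWt (μ : V → V → ℝ) (U : Finset V) : ℝ :=
  ∑ x ∈ U, ∑ᶠ y ∈ {z : V | z ∉ U}, μ x y

/-- The Dirichlet Cheeger constant `h_{μ,ν}(Ω) = min_{∅ ≠ U ⊆ Ω} |∂U|_μ / |U|_ν`. -/
noncomputable def cheeger (μ : V → V → ℝ) (ν : V → ℝ) (Ω : Finset V) : ℝ :=
  sInf {t : ℝ | ∃ U : Finset V, U ⊆ Ω ∧ U.Nonempty ∧
    t = bdryWt μ U / ∑ x ∈ U, ν x}

end PGraph

namespace PGraph

noncomputable def phi (p : ℝ) (s : ℝ) : ℝ := |s| ^ (p - 2) * s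

section Aux

variable {μ : V → V → ℝ} {ν : V → ℝ} {Ω : Finset V} {p : ℝ}

noncomputable def bigT (hG : IsWeightedGraph μ ν) (Ω : Finset V) : Finset V :=
  letI := Classical.decEq V
  Ω ∪ Ω.biUnion fun z => (hG.locFin z).toFinset

lemma subset_bigT (hG : IsWeightedGraph μ ν) : Ω ⊆ bigT hG Ω := by
  classical
  intro x hx
  simp only [bigT, Finset.mem_union]
  exact Or.inl hx

lemma mem_bigT_of_adj (hG : IsWeightedGraph μ ν) {x y : V} (hx : x ∈ Ω) (hμ : μ x y ≠ 0) :
    y ∈ bigT hG Ω := by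
  classical
  simp only [bigT, Finset.mem_union, Finset.mem_biUnion]
  exact Or.inr ⟨x, hx, by simp [Set.Finite.mem_toFinset, Function.mem_support, hμ]⟩

lemma mem_bigT_of_adj' (hG : IsWeightedGraph μ ν) {x y : V} (hy : y ∈ Ω) (hμ : μ x y ≠ 0) :
    x ∈ bigT hG Ω :=
  mem_bigT_of_adj hG hy (by rw [hG.symm]; exact hμ)

lemma inner_sum_eq (hG : IsWeightedGraph μ ν) {u : V → ℝ}
    (hsupp : ∀ x, x ∉ Ω → u x = 0) {G : ℝ → ℝ} (hG0 : G 0 = 0) (x : V) :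
    ∑ᶠ y : V, μ x y * G (u y - u x) = ∑ y ∈ bigT hG Ω, μ x y * G (u y - u x) := by
  apply finsum_eq_finset_sum_of_support_subset
  intro y hy
  simp only [Function.mem_support] at hy
  have hμxy : μ x y ≠ 0 := fun h => hy (by rw [h, zero_mul])
  by_cases hx : x ∈ Ω
  · exact mem_bigT_of_adj hG hx hμxy
  · have hux : u x = 0 := hsupp x hx
    have huy : u y ≠ 0 := by
      intro h
      exact hy (by rw [h, hux, sub_zero, hG0, mul_zero])
    have hyΩ : y ∈ Ω := by
      by_contra hyn
      exact huy (hsupp y hyn)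
    exact subset_bigT hG hyΩ

lemma energy_eq_sum (hG : IsWeightedGraph μ ν) (hp : 1 < p) {u : V → ℝ}
    (hsupp : ∀ x, x ∉ Ω → u x = 0) :
    energy μ p u =
      (1 / 2) * ∑ x ∈ bigT hG Ω, ∑ y ∈ bigT hG Ω, μ x y * |u y - u x| ^ p := by
  have hG0 : |(0:ℝ)| ^ p = 0 := by
    rw [abs_zero, Real.zero_rpow (by linarith)]
  unfold energy
  congr 1
  have h1 : ∀ x, (∑ᶠ y : V, μ x y * |u y - u x| ^ p)
      = ∑ y ∈ bigT hG Ω, μ x y * |u y - u x| ^ p := fun x =>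
    inner_sum_eq hG hsupp (G := fun d => |d| ^ p) hG0 x
  rw [finsum_congr h1]
  apply finsum_eq_finset_sum_of_support_subset
  intro x hx
  simp only [Function.mem_support] at hx
  by_contra hxT
  apply hx
  apply Finset.sum_eq_zero
  intro y _
  rcases eq_or_ne (μ x y) 0 with h | h
  · rw [h, zero_mul]
  · have hxΩ : x ∉ Ω := fun hxo => hxT (subset_bigT hG hxo)
    have hyΩ : y ∉ Ω := fun hyo => hxT (mem_bigT_of_adj' hG hyo h)
    rw [hsupp x hxΩ, hsupp y hyΩ, sub_zero, hG0, mul_zero]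

lemma eigen_sum (hG : IsWeightedGraph μ ν) {u : V → ℝ} {lam : ℝ}
    (hu : IsDirEigenfun μ ν Ω p u lam) {x : V} (hx : x ∈ Ω) :
    ∑ y ∈ bigT hG Ω, μ x y * phi p (u y - u x) = -lam * (ν x * phi p (u x)) := by
  have heq := hu.2.2 x hx
  unfold plap at heq
  have hfin : ∑ᶠ y : V, μ x y * (|u y - u x| ^ (p - 2) * (u y - u x))
      = ∑ y ∈ bigT hG Ω, μ x y * phi p (u y - u x) := by
    have := inner_sum_eq hG hu.1 (G := phi p) (by simp [phi]) x
    simpa [phi] using this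
  rw [hfin] at heq
  have hν : ν x ≠ 0 := (hG.nuPos x).ne'
  field_simp at heq
  rw [heq]
  unfold phi
  ring

end Aux

end PGraph

namespace PGraph
section Aux2
variable {V : Type*} {μ : V → V → ℝ} {ν : V → ℝ} {Ω : Finset V} {p : ℝ}

lemma phi_zero (p : ℝ) : phi p 0 = 0 := by simp [phi]

lemma phi_neg (p s : ℝ) : phi p (-s) = -phi p s := by simp [phi, mul_comm]

lemma phi_of_pos {s : ℝ} (hs : 0 < s) : phi p s = s ^ (p - 1) := by
  rw [phi, abs_of_pos hs]
  rw [show p - 1 = (p - 2) + 1 by ring, Real.rpow_add_one hs.ne']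

lemma phi_of_nonneg (hp : 1 < p) {s : ℝ} (hs : 0 ≤ s) : phi p s = s ^ (p - 1) := by
  rcases hs.eq_or_lt with h | h
  · rw [← h, phi_zero, Real.zero_rpow (by linarith)]
  · exact phi_of_pos h

lemma phi_pos (hp : 1 < p) {s : ℝ} (hs : 0 < s) : 0 < phi p s := by
  rw [phi_of_pos hs]; exact Real.rpow_pos_of_pos hs _

lemma phi_strictMono (hp : 1 < p) : StrictMono (phi p) := by
  intro s t hst
  have hp1 : (0:ℝ) < p - 1 := by linarith
  rcases le_or_gt 0 s with hs | hs
  · rw [phi_of_nonneg hp hs, phi_of_nonneg hp (hs.trans hst.le)]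
    exact Real.rpow_lt_rpow hs hst hp1
  · rcases le_or_gt 0 t with ht | ht
    · calc phi p s < 0 := by
            have : phi p s = -phi p (-s) := by rw [phi_neg]; ring
            rw [this, neg_neg_iff_pos]; exact phi_pos hp (by linarith)
        _ ≤ phi p t := by
            rw [phi_of_nonneg hp ht]
            exact Real.rpow_nonneg ht _
    · have h1 : phi p s = -phi p (-s) := by rw [phi_neg]; ring
      have h2 : phi p t = -phi p (-t) := by rw [phi_neg]; ring
      rw [h1, h2, neg_lt_neg_iff, phi_of_pos (by linarith), phi_of_pos (by linarith)]
      exact Real.rpow_lt_rpow (by linarith) (by linarith) hp1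

lemma phi_mul_self (hp : 1 < p) (d : ℝ) : phi p d * d = |d| ^ p := by
  rcases eq_or_ne d 0 with rfl | hd
  · rw [phi_zero, zero_mul, abs_zero, Real.zero_rpow (by linarith)]
  · have had : (0:ℝ) < |d| := abs_pos.2 hd
    rw [phi, mul_assoc, ← abs_mul_abs_self d,
      show |d| ^ (p - 2) * (|d| * |d|) = |d| ^ (p-2) * |d| * |d| by ring,
      ← Real.rpow_add_one had.ne', ← Real.rpow_add_one had.ne']
    ring_nf

lemma phi_scale (hp : 1 < p) {t : ℝ} (ht : 0 < t) (d : ℝ) :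
    phi p (t * d) = t ^ (p - 1) * phi p d := by
  rw [phi, phi, abs_mul, abs_of_pos ht, Real.mul_rpow ht.le (abs_nonneg d),
    show p - 1 = (p - 2) + 1 by ring, Real.rpow_add_one ht.ne']
  ring

/-- The summation-by-parts / energy identity for eigenfunctions. -/
lemma energy_identity (hG : IsWeightedGraph μ ν) (hp : 1 < p) {u : V → ℝ} {lam : ℝ}
    (hu : IsDirEigenfun μ ν Ω p u lam) :
    energy μ p u = lam * pnormP ν Ω p u := by
  classical
  set T := bigT hG Ω with hT
  have hsum : ∀ x ∈ T, ∀ y ∈ T, μ x y * |u y - u x| ^ p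
      = μ x y * phi p (u y - u x) * u y - μ x y * phi p (u y - u x) * u x := by
    intro x _ y _
    rw [mul_assoc, mul_assoc, ← mul_sub, ← mul_sub, phi_mul_self hp]
  have hE : energy μ p u = (1/2) * ∑ x ∈ T, ∑ y ∈ T, μ x y * |u y - u x| ^ p :=
    energy_eq_sum hG hp hu.1
  have hsplit : ∑ x ∈ T, ∑ y ∈ T, μ x y * |u y - u x| ^ p
      = (∑ x ∈ T, ∑ y ∈ T, μ x y * phi p (u y - u x) * u y)
        - ∑ x ∈ T, ∑ y ∈ T, μ x y * phi p (u y - u x) * u x := by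
    rw [← Finset.sum_sub_distrib]
    apply Finset.sum_congr rfl
    intro x hx
    rw [← Finset.sum_sub_distrib]
    exact Finset.sum_congr rfl fun y hy => hsum x hx y hy
  have hA : (∑ x ∈ T, ∑ y ∈ T, μ x y * phi p (u y - u x) * u y)
      = -∑ x ∈ T, ∑ y ∈ T, μ x y * phi p (u y - u x) * u x := by
    rw [Finset.sum_comm]
    rw [← Finset.sum_neg_distrib]
    apply Finset.sum_congr rfl
    intro y _
    rw [← Finset.sum_neg_distrib]
    apply Finset.sum_congr rfl
    intro x _
    rw [hG.symm y x, show u x - u y = -(u y - u x) by ring, phi_neg]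
    ring
  have hB : ∑ x ∈ T, ∑ y ∈ T, μ x y * phi p (u y - u x) * u x
      = -(lam * pnormP ν Ω p u) := by
    have hres : ∑ x ∈ T, ∑ y ∈ T, μ x y * phi p (u y - u x) * u x
        = ∑ x ∈ Ω, ∑ y ∈ T, μ x y * phi p (u y - u x) * u x := by
      symm
      apply Finset.sum_subset (subset_bigT hG)
      intro x _ hxΩ
      have : u x = 0 := hu.1 x hxΩ
      apply Finset.sum_eq_zero
      intro y _
      rw [this, mul_zero]
    rw [hres]
    rw [← neg_eq_iff_eq_neg]
    rw [← Finset.sum_neg_distrib]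
    rw [show lam * pnormP ν Ω p u = ∑ x ∈ Ω, lam * (|u x| ^ p * ν x) by
      rw [pnormP, Finset.mul_sum]]
    apply Finset.sum_congr rfl
    intro x hx
    have h1 : ∑ y ∈ T, μ x y * phi p (u y - u x) * u x
        = (∑ y ∈ T, μ x y * phi p (u y - u x)) * u x := by
      rw [Finset.sum_mul]
    rw [h1, eigen_sum hG hu hx]
    have : |u x| ^ p = phi p (u x) * u x := (phi_mul_self hp (u x)).symm
    rw [this]
    ring
  rw [hE, hsplit, hA, hB]
  ring

end Aux2
end PGraph

namespace PGraph
section Aux3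
variable {V : Type*} {μ : V → V → ℝ} {ν : V → ℝ} {Ω : Finset V} {p : ℝ}

lemma energy_nonneg (hG : IsWeightedGraph μ ν) (u : V → ℝ) : 0 ≤ energy μ p u := by
  unfold energy
  apply mul_nonneg (by norm_num)
  apply finsum_nonneg
  intro x
  apply finsum_nonneg
  intro y
  exact mul_nonneg (hG.nonneg x y) (Real.rpow_nonneg (abs_nonneg _) _)

lemma pnormP_nonneg (hG : IsWeightedGraph μ ν) (u : V → ℝ) : 0 ≤ pnormP ν Ω p u :=
  Finset.sum_nonneg fun x _ =>
    mul_nonneg (Real.rpow_nonneg (abs_nonneg _) _) (hG.nuPos x).le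

lemma pnormP_pos (hG : IsWeightedGraph μ ν) {u : V → ℝ}
    (hne : ∃ x ∈ Ω, u x ≠ 0) : 0 < pnormP ν Ω p u := by
  obtain ⟨x₀, hx₀, hux₀⟩ := hne
  apply Finset.sum_pos'
  · intro x _
    exact mul_nonneg (Real.rpow_nonneg (abs_nonneg _) _) (hG.nuPos x).le
  · exact ⟨x₀, hx₀, mul_pos (Real.rpow_pos_of_pos (abs_pos.2 hux₀) _) (hG.nuPos x₀)⟩

lemma lam1_le (hG : IsWeightedGraph μ ν) {w : V → ℝ}
    (hw0 : ∀ x, x ∉ Ω → w x = 0) (hwne : ∃ x ∈ Ω, w x ≠ 0) :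
    lam1 μ ν Ω p ≤ energy μ p w / pnormP ν Ω p w := by
  apply csInf_le
  · refine ⟨0, ?_⟩
    rintro t ⟨v, hv0, hvne, rfl⟩
    exact div_nonneg (energy_nonneg hG v) (pnormP_nonneg hG v)
  · exact ⟨w, hw0, hwne, rfl⟩

lemma lam1_mul_le (hG : IsWeightedGraph μ ν) {w : V → ℝ}
    (hw0 : ∀ x, x ∉ Ω → w x = 0) (hwne : ∃ x ∈ Ω, w x ≠ 0) :
    lam1 μ ν Ω p * pnormP ν Ω p w ≤ energy μ p w := by
  have h := lam1_le (p := p) hG hw0 hwne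
  have hP := pnormP_pos (p := p) hG hwne
  calc lam1 μ ν Ω p * pnormP ν Ω p w
      ≤ (energy μ p w / pnormP ν Ω p w) * pnormP ν Ω p w := by
        exact mul_le_mul_of_nonneg_right h hP.le
    _ = energy μ p w := by field_simp

lemma lam1_nonneg (hG : IsWeightedGraph μ ν) (hp : 1 < p) {u : V → ℝ}
    (hu : IsDirEigenfun μ ν Ω p u (lam1 μ ν Ω p)) : 0 ≤ lam1 μ ν Ω p := by
  have hid := energy_identity hG hp hu
  have hE := energy_nonneg (p := p) hG u
  have hP := pnormP_pos (p := p) hG hu.2.1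
  nlinarith

end Aux3
end PGraph

namespace PGraph
section Aux4
variable {V : Type*} {μ : V → V → ℝ} {ν : V → ℝ} {Ω : Finset V} {p : ℝ}

lemma pnormP_abs (u : V → ℝ) : pnormP ν Ω p (fun x => |u x|) = pnormP ν Ω p u := by
  unfold pnormP
  exact Finset.sum_congr rfl fun x _ => by rw [abs_abs]

/-- Energy of |u| equals lam1 * pnorm for a first eigenfunction. -/
lemma energy_abs_eq (hG : IsWeightedGraph μ ν) (hp : 1 < p) {u : V → ℝ}
    (hu : IsDirEigenfun μ ν Ω p u (lam1 μ ν Ω p)) :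
    energy μ p (fun x => |u x|) = lam1 μ ν Ω p * pnormP ν Ω p u := by
  have habs0 : ∀ x, x ∉ Ω → |u x| = 0 := fun x hx => by rw [hu.1 x hx, abs_zero]
  have habsne : ∃ x ∈ Ω, |u x| ≠ 0 := by
    obtain ⟨x, hx, hux⟩ := hu.2.1
    exact ⟨x, hx, by simpa using hux⟩
  have hge : lam1 μ ν Ω p * pnormP ν Ω p u ≤ energy μ p (fun x => |u x|) := by
    have := lam1_mul_le (p := p) hG habs0 habsne
    rwa [pnormP_abs] at this
  have hle : energy μ p (fun x => |u x|) ≤ energy μ p u := by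
    rw [energy_eq_sum hG hp habs0, energy_eq_sum hG hp hu.1]
    apply mul_le_mul_of_nonneg_left _ (by norm_num)
    apply Finset.sum_le_sum
    intro x _
    apply Finset.sum_le_sum
    intro y _
    apply mul_le_mul_of_nonneg_left _ (hG.nonneg x y)
    exact Real.rpow_le_rpow (abs_nonneg _) (abs_abs_sub_abs_le_abs_sub _ _) (by linarith)
  have hid := energy_identity hG hp hu
  linarith

lemma no_sign_change (hG : IsWeightedGraph μ ν) (hp : 1 < p) {u : V → ℝ}
    (hu : IsDirEigenfun μ ν Ω p u (lam1 μ ν Ω p)) :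
    ∀ x y, 0 < μ x y → ¬(0 < u x ∧ u y < 0) := by
  intro x y hμ ⟨hux, huy⟩
  have habs0 : ∀ z, z ∉ Ω → |u z| = 0 := fun z hz => by rw [hu.1 z hz, abs_zero]
  have hxΩ : x ∈ Ω := by
    by_contra h; rw [hu.1 x h] at hux; exact lt_irrefl _ hux
  have hyΩ : y ∈ Ω := by
    by_contra h; rw [hu.1 y h] at huy; exact lt_irrefl _ huy
  set T := bigT hG Ω with hT
  have hxT : x ∈ T := subset_bigT hG hxΩ
  have hyT : y ∈ T := subset_bigT hG hyΩ
  -- strict inequality at the edge (x,y)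
  have hstrict : |(|u y| - |u x|)| ^ p < |u y - u x| ^ p := by
    apply Real.rpow_lt_rpow (abs_nonneg _) _ (by linarith)
    rw [abs_of_neg huy, abs_of_pos hux, abs_of_neg (by linarith : u y - u x < 0), abs_lt]
    constructor <;> nlinarith
  have hlt : energy μ p (fun z => |u z|) < energy μ p u := by
    rw [energy_eq_sum hG hp habs0, energy_eq_sum hG hp hu.1]
    apply mul_lt_mul_of_pos_left _ (by norm_num : (0:ℝ) < 1/2)
    apply Finset.sum_lt_sum
    · intro a _
      apply Finset.sum_le_sum
      intro b _
      apply mul_le_mul_of_nonneg_left _ (hG.nonneg a b)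
      exact Real.rpow_le_rpow (abs_nonneg _) (abs_abs_sub_abs_le_abs_sub _ _) (by linarith)
    · refine ⟨x, hxT, ?_⟩
      apply Finset.sum_lt_sum
      · intro b _
        apply mul_le_mul_of_nonneg_left _ (hG.nonneg x b)
        exact Real.rpow_le_rpow (abs_nonneg _) (abs_abs_sub_abs_le_abs_sub _ _) (by linarith)
      · exact ⟨y, hyT, by
          apply mul_lt_mul_of_pos_left _ hμ
          exact hstrict⟩
  have h1 := energy_abs_eq hG hp hu
  have h2 := energy_identity hG hp hu
  linarith

end Aux4
end PGraph

namespace PGraph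
section Aux5
variable {V : Type*} {μ : V → V → ℝ} {ν : V → ℝ} {Ω : Finset V} {p : ℝ}

set_option maxHeartbeats 1000000 in
lemma zero_propagates (hG : IsWeightedGraph μ ν) (hp : 1 < p) {u : V → ℝ}
    (hu : IsDirEigenfun μ ν Ω p u (lam1 μ ν Ω p)) {x₀ y₀ : V} (hx₀ : x₀ ∈ Ω)
    (h0 : u x₀ = 0) (hμ₀ : 0 < μ x₀ y₀) : u y₀ = 0 := by
  classical
  by_contra hne
  set lam := lam1 μ ν Ω p with hlam
  set v : V → ℝ := fun z => |u z| with hv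
  have hvnonneg : ∀ z, 0 ≤ v z := fun z => abs_nonneg _
  have hv0 : ∀ z, z ∉ Ω → v z = 0 := fun z hz => by simp [hv, hu.1 z hz]
  have hvx₀ : v x₀ = 0 := by simp [hv, h0]
  set T := bigT hG Ω with hT
  have hx₀T : x₀ ∈ T := subset_bigT hG hx₀
  have hy₀T : y₀ ∈ T := mem_bigT_of_adj hG hx₀ hμ₀.ne'
  set a := v y₀ with ha
  have hapos : 0 < a := abs_pos.2 hne
  set μ₀ := μ x₀ y₀ with hμ₀def
  set M := ∑ b ∈ T, μ x₀ b with hM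
  have hM0 : 0 ≤ M := Finset.sum_nonneg fun b _ => hG.nonneg x₀ b
  have hp1 : (0:ℝ) < p - 1 := by linarith
  set c := p * (a / 2) ^ (p - 1) with hc
  have hcpos : 0 < c := mul_pos (by linarith) (Real.rpow_pos_of_pos (by linarith) _)
  set Tpos := T.filter (fun b => 0 < v b) with hTpos
  have hy₀pos : y₀ ∈ Tpos := Finset.mem_filter.2 ⟨hy₀T, hapos⟩
  have hTposne : Tpos.Nonempty := ⟨y₀, hy₀pos⟩
  obtain ⟨bm, hbm, hbmmin⟩ := Finset.exists_min_image Tpos v hTposne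
  set m := v bm with hm
  have hmpos : 0 < m := (Finset.mem_filter.1 hbm).2
  set E₀ := (μ₀ * c / (M + 1)) ^ ((p - 1)⁻¹) with hE₀
  have hfrac : 0 < μ₀ * c / (M + 1) := div_pos (mul_pos hμ₀ hcpos) (by linarith)
  have hE₀pos : 0 < E₀ := Real.rpow_pos_of_pos hfrac _
  set ε := min (min (a / 2) m) E₀ with hε
  have hεpos : 0 < ε := lt_min (lt_min (by linarith) hmpos) hE₀pos
  have hεa : ε ≤ a / 2 := le_trans (min_le_left _ _) (min_le_left _ _)
  have hεm : ε ≤ m := le_trans (min_le_left _ _) (min_le_right _ _)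
  have hεE : ε ≤ E₀ := min_le_right _ _
  have haε : 0 < a - ε := by linarith
  -- the perturbed function
  set w : V → ℝ := fun z => if z = x₀ then ε else v z with hw
  have hwx₀ : w x₀ = ε := by simp [hw]
  have hwz : ∀ z, z ≠ x₀ → w z = v z := by
    intro z hz; simp [hw, hz]
  have hw0 : ∀ z, z ∉ Ω → w z = 0 := by
    intro z hz
    have hzx : z ≠ x₀ := fun h => hz (h ▸ hx₀)
    rw [hwz z hzx]; exact hv0 z hz
  have hwne : ∃ x ∈ Ω, w x ≠ 0 := ⟨x₀, hx₀, by rw [hwx₀]; exact hεpos.ne'⟩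
  -- r b
  set r : V → ℝ := fun b => μ x₀ b * (|v b - ε| ^ p - (v b) ^ p) with hr
  have hrx₀ : r x₀ = 0 := by
    show μ x₀ x₀ * _ = 0
    rw [hG.loopless x₀, zero_mul]
  -- energy difference
  have hEdiff : energy μ p w = energy μ p v + ∑ b ∈ T, r b := by
    rw [energy_eq_sum hG hp hw0, energy_eq_sum hG hp hv0]
    have hh : ∀ x, ∀ y, x ∈ T → y ∈ T →
        μ x y * |w y - w x| ^ p
        = μ x y * |v y - v x| ^ p + (if x = x₀ then r y else if y = x₀ then r x else 0) := by
      intro x y _ _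
      by_cases hx : x = x₀
      · rw [hx, if_pos rfl]
        by_cases hy : y = x₀
        · rw [hy, hrx₀, hG.loopless x₀]
          simp
        · rw [hwz y hy, hwx₀, hvx₀, sub_zero]
          show _ = _ + μ x₀ y * (|v y - ε| ^ p - (v y) ^ p)
          rw [abs_of_nonneg (hvnonneg y)]
          ring
      · by_cases hy : y = x₀
        · rw [if_neg hx, hy, if_pos rfl, hwx₀, hvx₀, zero_sub, abs_sub_comm ε (w x),
            abs_neg, hwz x hx, hG.symm x x₀]
          show _ = _ + μ x₀ x * (|v x - ε| ^ p - (v x) ^ p)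
          rw [abs_of_nonneg (hvnonneg x)]
          ring
        · rw [if_neg hx, if_neg hy, hwz x hx, hwz y hy, add_zero]
    have hsum : ∑ x ∈ T, ∑ y ∈ T, μ x y * |w y - w x| ^ p
        = ∑ x ∈ T, ∑ y ∈ T, μ x y * |v y - v x| ^ p
          + ∑ x ∈ T, ∑ y ∈ T, (if x = x₀ then r y else if y = x₀ then r x else 0) := by
      rw [← Finset.sum_add_distrib]
      apply Finset.sum_congr rfl
      intro x hx
      rw [← Finset.sum_add_distrib]
      exact Finset.sum_congr rfl fun y hy => hh x y hx hy
    have hrow : ∀ x ∈ T, (∑ y ∈ T, (if x = x₀ then r y else if y = x₀ then r x else 0))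
        = (if x = x₀ then ∑ b ∈ T, r b else r x) := by
      intro x _
      by_cases hx : x = x₀
      · simp [hx]
      · rw [if_neg hx]
        rw [Finset.sum_eq_single_of_mem x₀ hx₀T]
        · rw [if_neg hx, if_pos rfl]
        · intro b _ hb
          rw [if_neg hx, if_neg hb]
    have hite : ∀ x ∈ T, (if x = x₀ then ∑ b ∈ T, r b else r x)
        = r x + (if x = x₀ then (∑ b ∈ T, r b) - r x else 0) := by
      intro x _
      by_cases hx : x = x₀
      · rw [if_pos hx, if_pos hx]; ring
      · rw [if_neg hx, if_neg hx]; ring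
    have hcorr : ∑ x ∈ T, ∑ y ∈ T, (if x = x₀ then r y else if y = x₀ then r x else 0)
        = 2 * ∑ b ∈ T, r b := by
      rw [Finset.sum_congr rfl hrow, Finset.sum_congr rfl hite, Finset.sum_add_distrib,
        Finset.sum_ite_eq' T x₀ (fun x => (∑ b ∈ T, r b) - r x), if_pos hx₀T, hrx₀]
      ring
    rw [hsum, hcorr]
    ring
  -- pnorm difference
  have hPdiff : pnormP ν Ω p w = pnormP ν Ω p v + ε ^ p * ν x₀ := by
    unfold pnormP
    have hpt : ∀ x ∈ Ω, |w x| ^ p * ν x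
        = |v x| ^ p * ν x + (if x = x₀ then ε ^ p * ν x₀ else 0) := by
      intro x _
      by_cases hx : x = x₀
      · rw [hx, if_pos rfl, hwx₀, hvx₀, abs_zero, Real.zero_rpow (by linarith : p ≠ 0),
          zero_mul, abs_of_pos hεpos, zero_add]
      · rw [if_neg hx, hwz x hx, add_zero]
    rw [Finset.sum_congr rfl hpt, Finset.sum_add_distrib,
      Finset.sum_ite_eq' Ω x₀ (fun _ => ε ^ p * ν x₀), if_pos hx₀]
  -- v is a minimizer
  have hEv : energy μ p v = lam * pnormP ν Ω p v := by
    have h1 := energy_abs_eq hG hp hu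
    have h2 : pnormP ν Ω p v = pnormP ν Ω p u := pnormP_abs u
    rw [h2]
    exact h1
  have hlam0 : 0 ≤ lam := lam1_nonneg hG hp hu
  -- the Rayleigh bound for w
  have hRay := lam1_mul_le (p := p) hG hw0 hwne
  rw [← hlam, hPdiff, hEdiff, hEv] at hRay
  have hrsum_nonneg : 0 ≤ ∑ b ∈ T, r b := by
    nlinarith [mul_nonneg (mul_nonneg hlam0 (Real.rpow_nonneg hεpos.le p)) (hG.nuPos x₀).le]
  -- now show the sum is negative
  have hkey : ε ^ (p - 1) ≤ μ₀ * c / (M + 1) := by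
    calc ε ^ (p - 1) ≤ E₀ ^ (p - 1) :=
          Real.rpow_le_rpow hεpos.le hεE hp1.le
      _ = μ₀ * c / (M + 1) := Real.rpow_inv_rpow hfrac.le hp1.ne'
  have hry₀ : r y₀ ≤ -(μ₀ * c * ε) := by
    have hbern : (a - ε) ^ p + c * ε ≤ a ^ p := by
      set s := ε / (a - ε) with hs
      have hs0 : 0 ≤ s := div_nonneg hεpos.le haε.le
      have hb := one_add_mul_self_le_rpow_one_add (by linarith : (-1:ℝ) ≤ s) hp.le
      have hmul : (a - ε) ^ p * (1 + p * s) ≤ (a - ε) ^ p * (1 + s) ^ p :=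
        mul_le_mul_of_nonneg_left hb (Real.rpow_nonneg haε.le p)
      have hprod : (a - ε) ^ p * (1 + s) ^ p = a ^ p := by
        rw [← Real.mul_rpow haε.le (by linarith : (0:ℝ) ≤ 1 + s)]
        congr 1
        rw [hs, mul_add, mul_one, mul_div_assoc', mul_div_cancel_left₀ ε haε.ne']
        ring
      have hlin : (a - ε) ^ p * (1 + p * s) = (a - ε) ^ p + p * ((a - ε) ^ (p - 1)) * ε := by
        rw [Real.rpow_sub_one haε.ne' p, hs]
        field_simp
      have hmono : (a / 2) ^ (p - 1) ≤ (a - ε) ^ (p - 1) :=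
        Real.rpow_le_rpow (by linarith) (by linarith) hp1.le
      have hstep : (a - ε) ^ p + c * ε ≤ (a - ε) ^ p * (1 + p * s) := by
        rw [hlin, hc]
        have : p * (a / 2) ^ (p - 1) * ε ≤ p * (a - ε) ^ (p - 1) * ε := by
          apply mul_le_mul_of_nonneg_right _ hεpos.le
          exact mul_le_mul_of_nonneg_left hmono (by linarith)
        linarith
      calc (a - ε) ^ p + c * ε ≤ (a - ε) ^ p * (1 + p * s) := hstep
        _ ≤ (a - ε) ^ p * (1 + s) ^ p := hmul
        _ = a ^ p := hprod
    show μ₀ * (|v y₀ - ε| ^ p - (v y₀) ^ p) ≤ -(μ₀ * c * ε)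
    rw [← ha, abs_of_pos haε]
    calc μ₀ * ((a - ε) ^ p - a ^ p) ≤ μ₀ * (-(c * ε)) := by
          apply mul_le_mul_of_nonneg_left _ hμ₀.le
          linarith
      _ = -(μ₀ * c * ε) := by ring
  have hrb : ∀ b ∈ T.erase y₀, r b ≤ μ x₀ b * ε ^ p := by
    intro b hb
    have hbT : b ∈ T := Finset.mem_of_mem_erase hb
    show μ x₀ b * (|v b - ε| ^ p - (v b) ^ p) ≤ μ x₀ b * ε ^ p
    rcases (hvnonneg b).eq_or_lt with hvb | hvb
    · rw [← hvb, zero_sub, abs_neg, abs_of_pos hεpos,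
        Real.zero_rpow (by linarith : p ≠ 0), sub_zero]
    · have hbpos : b ∈ Tpos := Finset.mem_filter.2 ⟨hbT, hvb⟩
      have hmb : m ≤ v b := hbmmin b hbpos
      have hvbε : 0 ≤ v b - ε := by linarith
      have hle : |v b - ε| ^ p ≤ (v b) ^ p := by
        rw [abs_of_nonneg hvbε]
        exact Real.rpow_le_rpow hvbε (by linarith) (by linarith)
      have hneg : μ x₀ b * (|v b - ε| ^ p - (v b) ^ p) ≤ 0 :=
        mul_nonpos_of_nonneg_of_nonpos (hG.nonneg x₀ b) (by linarith)
      exact hneg.trans (mul_nonneg (hG.nonneg x₀ b) (Real.rpow_nonneg hεpos.le p))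
  have hsum_bound : ∑ b ∈ T, r b ≤ -(μ₀ * c * ε) + M * ε ^ p := by
    have h1 := Finset.add_sum_erase T r hy₀T
    have h2 : ∑ b ∈ T.erase y₀, r b ≤ ∑ b ∈ T.erase y₀, μ x₀ b * ε ^ p :=
      Finset.sum_le_sum hrb
    have h3 : ∑ b ∈ T.erase y₀, μ x₀ b * ε ^ p ≤ M * ε ^ p := by
      rw [← Finset.sum_mul, hM]
      apply mul_le_mul_of_nonneg_right _ (Real.rpow_nonneg hεpos.le p)
      apply Finset.sum_le_sum_of_subset_of_nonneg (Finset.erase_subset _ _)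
      intro i _ _
      exact hG.nonneg x₀ i
    have h4 : ∑ b ∈ T, r b = r y₀ + ∑ b ∈ T.erase y₀, r b := h1.symm
    rw [h4]
    linarith
  have hfinal : M * ε ^ p < μ₀ * c * ε := by
    have hεp : ε ^ p = ε ^ (p - 1) * ε := by
      rw [← Real.rpow_add_one hεpos.ne' (p - 1)]
      norm_num
    rw [hεp, ← mul_assoc]
    apply mul_lt_mul_of_pos_right _ hεpos
    calc M * ε ^ (p - 1) ≤ M * (μ₀ * c / (M + 1)) :=
          mul_le_mul_of_nonneg_left hkey hM0
      _ < μ₀ * c := by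
          rw [div_eq_mul_inv,
            show M * (μ₀ * c * (M + 1)⁻¹) = (μ₀ * c) * (M * (M + 1)⁻¹) by ring]
          have hlt : M * (M + 1)⁻¹ < 1 := by
            rw [← div_eq_mul_inv, div_lt_one (by linarith)]
            linarith
          nlinarith [mul_pos hμ₀ hcpos]
  linarith

end Aux5
end PGraph

namespace PGraph
section Aux6
variable {V : Type*} {μ : V → V → ℝ} {ν : V → ℝ} {Ω : Finset V} {p : ℝ}

lemma eigen_ne_zero_on (hG : IsWeightedGraph μ ν) (hconn : ConnOn μ Ω) (hp : 1 < p)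
    {u : V → ℝ} (hu : IsDirEigenfun μ ν Ω p u (lam1 μ ν Ω p)) :
    ∀ x ∈ Ω, u x ≠ 0 := by
  intro x hx h0
  obtain ⟨x₁, hx₁, hux₁⟩ := hu.2.1
  have key : ∀ z w : V, Relation.ReflTransGen (fun a b => a ∈ Ω ∧ b ∈ Ω ∧ 0 < μ a b) z w →
      u z = 0 → u w = 0 := by
    intro z w h
    induction h with
    | refl => exact id
    | tail hseg hrel ih =>
        intro hz
        exact zero_propagates hG hp hu hrel.1 (ih hz) hrel.2.2
  exact hux₁ (key x x₁ (hconn x hx x₁ hx₁) h0)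

lemma eigen_sign (hG : IsWeightedGraph μ ν) (hconn : ConnOn μ Ω) (hp : 1 < p)
    {u : V → ℝ} (hu : IsDirEigenfun μ ν Ω p u (lam1 μ ν Ω p)) :
    (∀ x ∈ Ω, 0 < u x) ∨ (∀ x ∈ Ω, u x < 0) := by
  obtain ⟨x₁, hx₁, hux₁⟩ := hu.2.1
  have hne := eigen_ne_zero_on hG hconn hp hu
  rcases hux₁.lt_or_gt with hneg | hpos
  · right
    have key : ∀ z w : V, Relation.ReflTransGen (fun a b => a ∈ Ω ∧ b ∈ Ω ∧ 0 < μ a b) z w →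
        u z < 0 → u w < 0 := by
      intro z w h
      induction h with
      | refl => exact id
      | @tail b c hseg hrel ih =>
          intro hz
          have hb : u b < 0 := ih hz
          rcases (hne c hrel.2.1).lt_or_gt with h' | h'
          · exact h'
          · exact absurd ⟨h', hb⟩ (no_sign_change hG hp hu c b
              (by rw [hG.symm]; exact hrel.2.2))
    exact fun z hz => key x₁ z (hconn x₁ hx₁ z hz) hneg
  · left
    have key : ∀ z w : V, Relation.ReflTransGen (fun a b => a ∈ Ω ∧ b ∈ Ω ∧ 0 < μ a b) z w →
        0 < u z → 0 < u w := by
      intro z w h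
      induction h with
      | refl => exact id
      | @tail b c hseg hrel ih =>
          intro hz
          have hb : 0 < u b := ih hz
          rcases (hne c hrel.2.1).lt_or_gt with h' | h'
          · exact absurd ⟨hb, h'⟩ (no_sign_change hG hp hu b c hrel.2.2)
          · exact h'
    exact fun z hz => key x₁ z (hconn x₁ hx₁ z hz) hpos

lemma eigen_neg {u : V → ℝ} {lam : ℝ} (hu : IsDirEigenfun μ ν Ω p u lam) :
    IsDirEigenfun μ ν Ω p (fun x => -u x) lam := by
  obtain ⟨h0, ⟨x₁, hx₁, hne⟩, heq⟩ := hu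
  refine ⟨fun x hx => by simp [h0 x hx], ⟨x₁, hx₁, by simpa using hne⟩, ?_⟩
  intro x hx
  have hpt : ∀ y, μ x y * (|-u y - -u x| ^ (p - 2) * (-u y - -u x))
      = -(μ x y * (|u y - u x| ^ (p - 2) * (u y - u x))) := by
    intro y
    rw [show -u y - -u x = -(u y - u x) by ring, abs_neg]
    ring
  have hL : plap μ ν p (fun x => -u x) x = -plap μ ν p u x := by
    unfold plap
    simp only
    rw [finsum_congr hpt, finsum_neg_distrib]
    ring
  rw [hL, heq x hx, abs_neg]
  ring

lemma eigen_ratio (hG : IsWeightedGraph μ ν) (hconn : ConnOn μ Ω) (hp : 1 < p)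
    {u₁ u₂ : V → ℝ}
    (h₁ : IsDirEigenfun μ ν Ω p u₁ (lam1 μ ν Ω p))
    (h₂ : IsDirEigenfun μ ν Ω p u₂ (lam1 μ ν Ω p))
    (hpos₁ : ∀ x ∈ Ω, 0 < u₁ x) (hpos₂ : ∀ x ∈ Ω, 0 < u₂ x) :
    ∃ t : ℝ, 0 < t ∧ ∀ x, u₁ x = t * u₂ x := by
  classical
  set lam := lam1 μ ν Ω p with hlam
  have hne : Ω.Nonempty := by
    obtain ⟨x₁, hx₁, _⟩ := h₁.2.1
    exact ⟨x₁, hx₁⟩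
  obtain ⟨x₀, hx₀, hmin⟩ := Finset.exists_min_image Ω (fun x => u₁ x / u₂ x) hne
  set t := u₁ x₀ / u₂ x₀ with ht
  have htpos : 0 < t := div_pos (hpos₁ x₀ hx₀) (hpos₂ x₀ hx₀)
  have hge : ∀ y, t * u₂ y ≤ u₁ y := by
    intro y
    by_cases hy : y ∈ Ω
    · have hmy := hmin y hy
      calc t * u₂ y ≤ (u₁ y / u₂ y) * u₂ y :=
            mul_le_mul_of_nonneg_right hmy (hpos₂ y hy).le
        _ = u₁ y := div_mul_cancel₀ _ (hpos₂ y hy).ne'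
    · rw [h₁.1 y hy, h₂.1 y hy, mul_zero]
  have hstep : ∀ x ∈ Ω, u₁ x = t * u₂ x → ∀ y, μ x y ≠ 0 → u₁ y = t * u₂ y := by
    intro x hx hxe y hμxy
    set T := bigT hG Ω with hT
    have hyT : y ∈ T := mem_bigT_of_adj hG hx hμxy
    have e₁ := eigen_sum hG h₁ hx
    have e₂ := eigen_sum hG h₂ hx
    have e₂' : ∑ z ∈ T, μ x z * phi p (t * u₂ z - t * u₂ x)
        = -lam * (ν x * phi p (u₁ x)) := by
      have hscale : ∀ z, μ x z * phi p (t * u₂ z - t * u₂ x)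
          = t ^ (p - 1) * (μ x z * phi p (u₂ z - u₂ x)) := by
        intro z
        rw [show t * u₂ z - t * u₂ x = t * (u₂ z - u₂ x) by ring, phi_scale hp htpos]
        ring
      rw [Finset.sum_congr rfl (fun z _ => hscale z), ← Finset.mul_sum, e₂, hxe,
        phi_scale hp htpos]
      ring
    have hle : ∀ z ∈ T, μ x z * phi p (t * u₂ z - t * u₂ x)
        ≤ μ x z * phi p (u₁ z - u₁ x) := by
      intro z _
      apply mul_le_mul_of_nonneg_left _ (hG.nonneg x z)
      apply (phi_strictMono hp).monotone
      have := hge z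
      rw [hxe]
      linarith
    have hsums : ∑ z ∈ T, μ x z * phi p (t * u₂ z - t * u₂ x)
        = ∑ z ∈ T, μ x z * phi p (u₁ z - u₁ x) := by rw [e₂', e₁]
    have hall := (Finset.sum_eq_sum_iff_of_le hle).1 hsums y hyT
    have hφ : phi p (t * u₂ y - t * u₂ x) = phi p (u₁ y - u₁ x) :=
      mul_left_cancel₀ hμxy hall
    have harg := (phi_strictMono hp).injective hφ
    rw [hxe] at harg
    linarith
  have hx₀eq : u₁ x₀ = t * u₂ x₀ := by
    rw [ht]
    exact (div_mul_cancel₀ _ (hpos₂ x₀ hx₀).ne').symm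
  have key : ∀ z w : V, Relation.ReflTransGen (fun a b => a ∈ Ω ∧ b ∈ Ω ∧ 0 < μ a b) z w →
      u₁ z = t * u₂ z → u₁ w = t * u₂ w := by
    intro z w h
    induction h with
    | refl => exact id
    | @tail b c hseg hrel ih =>
        intro hz
        exact hstep b hrel.1 (ih hz) c hrel.2.2.ne'
  refine ⟨t, htpos, fun x => ?_⟩
  by_cases hx : x ∈ Ω
  · exact key x₀ x (hconn x₀ hx₀ x hx) hx₀eq
  · rw [h₁.1 x hx, h₂.1 x hx, mul_zero]

end Aux6
end PGraph

namespace PGraph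

/-- The first eigenfunction of the Dirichlet `p`-Laplacian (`p > 1`) on a
finite connected subset `Ω` is unique up to scalar multiplication. -/
theorem first_eigenfun_unique {V : Type*} {μ : V → V → ℝ} {ν : V → ℝ}
    (hG : IsWeightedGraph μ ν) {Ω : Finset V} (hconn : ConnOn μ Ω)
    {p : ℝ} (hp : 1 < p) {u₁ u₂ : V → ℝ}
    (hu₁ : IsDirEigenfun μ ν Ω p u₁ (lam1 μ ν Ω p))
    (hu₂ : IsDirEigenfun μ ν Ω p u₂ (lam1 μ ν Ω p)) :
    ∃ c : ℝ, c ≠ 0 ∧ ∀ x, u₁ x = c * u₂ x := by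
  rcases eigen_sign hG hconn hp hu₁ with hs₁ | hs₁ <;>
    rcases eigen_sign hG hconn hp hu₂ with hs₂ | hs₂
  · obtain ⟨t, ht, h⟩ := eigen_ratio hG hconn hp hu₁ hu₂ hs₁ hs₂
    exact ⟨t, ht.ne', h⟩
  · obtain ⟨t, ht, h⟩ := eigen_ratio hG hconn hp hu₁ (eigen_neg hu₂) hs₁
      (fun x hx => neg_pos.mpr (hs₂ x hx))
    refine ⟨-t, by simpa using ht.ne', fun x => ?_⟩
    have := h x
    linarith [this]
  · obtain ⟨t, ht, h⟩ := eigen_ratio hG hconn hp (eigen_neg hu₁) hu₂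
      (fun x hx => neg_pos.mpr (hs₁ x hx)) hs₂
    refine ⟨-t, by simpa using ht.ne', fun x => ?_⟩
    have := h x
    linarith [this]
  · obtain ⟨t, ht, h⟩ := eigen_ratio hG hconn hp (eigen_neg hu₁) (eigen_neg hu₂)
      (fun x hx => neg_pos.mpr (hs₁ x hx)) (fun x hx => neg_pos.mpr (hs₂ x hx))
    refine ⟨t, ht.ne', fun x => ?_⟩
    have := h x
    linarith [this]

end PGraph
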